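/- Let a, b ∈ F[t] with a pure (i.e., gcd(a, a*) = 1) and b even (i.e., b* = b). Then there exists x ∈ F[t] such that a x + a* x* = b. -/

import Mathlib

open Polynomial

/-- The involution of `F[t]` fixing `F` and sending `t ↦ -t`. -/
noncomputable def pstar {F : Type*} [Field F] (p : F[X]) : F[X] := p.comp (-X)

/-- The induced involution on matrices: transpose composed with entrywise `pstar`. -/
noncomputable def mstar {F : Type*} [Field F] {n : ℕ}
    (A : Matrix (Fin n) (Fin n) F[X]) : Matrix (Fin n) (Fin n) F[X] :=
  Matrix.of fun i j => pstar (A j i)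

/-- `A` and `B` are congruent if `B = S* A S` for some `S ∈ GL_n(F[t])`. -/
def MatCongruent {F : Type*} [Field F] {n : ℕ}
    (A B : Matrix (Fin n) (Fin n) F[X]) : Prop :=
  ∃ S : Matrix (Fin n) (Fin n) F[X], IsUnit S.det ∧ B = mstar S * A * S

lemma pstar_add {F : Type*} [Field F] (p q : F[X]) :
    pstar (p + q) = pstar p + pstar q := by simp [pstar, add_comp]

lemma pstar_mul {F : Type*} [Field F] (p q : F[X]) :
    pstar (p * q) = pstar p * pstar q := by simp [pstar, mul_comp]

lemma pstar_pstar {F : Type*} [Field F] (p : F[X]) : pstar (pstar p) = p := by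
  simp [pstar, comp_assoc]

lemma pstar_C {F : Type*} [Field F] (c : F) : pstar (C c) = C c := by
  simp [pstar]

/-- If `a ∈ F[t]` is pure and `b` is even, then `a x + a* x* = b` for some `x`. -/
theorem pure_solves_even {F : Type*} [Field F] [IsAlgClosed F]
    (h2 : (2 : F) ≠ 0) (a b : F[X])
    (ha : IsCoprime a (pstar a)) (hb : pstar b = b) :
    ∃ x : F[X], a * x + pstar a * pstar x = b := by
  obtain ⟨u, v, huv⟩ := ha
  obtain ⟨p, hp⟩ : ∃ p, p = u * b := ⟨_, rfl⟩
  obtain ⟨q, hq⟩ : ∃ q, q = v * b := ⟨_, rfl⟩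
  have h1 : a * p + pstar a * q = b := by
    rw [hp, hq]; linear_combination b * huv
  have h2' : pstar a * pstar p + a * pstar q = b := by
    have := congrArg pstar h1
    rwa [pstar_add, pstar_mul, pstar_mul, pstar_pstar, hb] at this
  refine ⟨C (2 : F)⁻¹ * (p + pstar q), ?_⟩
  rw [pstar_mul, pstar_C, pstar_add, pstar_pstar]
  have hC : C (2 : F)⁻¹ * C (2 : F) = 1 := by
    rw [← C_mul, inv_mul_cancel₀ h2, C_1]
  calc a * (C (2 : F)⁻¹ * (p + pstar q)) + pstar a * (C (2 : F)⁻¹ * (pstar p + q))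
      = C (2 : F)⁻¹ * ((a * p + pstar a * q) + (pstar a * pstar p + a * pstar q)) := by ring
    _ = C (2 : F)⁻¹ * (C (2 : F) * b) := by rw [h1, h2']; rw [show ((C (2:F)) : F[X]) = 2 from map_ofNat C 2]; ring
    _ = b := by rw [← mul_assoc, hC, one_mul]
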